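/- arXiv:0802.1080 — 2 statements merged into one kernel-verified Lean document; each statement's English description precedes it below -/
import Mathlib

section
/- The free Laplacian H₀ on ℓ²(T) of the rooted binary tree is a bounded self-adjoint operator, and its spectrum is exactly the interval [−2√2, 2√2]. -/
open MeasureTheory Filter

noncomputable section

abbrev l2T : Type := lp (fun _ : List Bool => ℂ) 2

def eT (x : List Bool) : l2T := lp.single 2 x 1

def parentVal (f : List Bool → ℂ) (x : List Bool) : ℂ :=
  match x with
  | [] => 0
  | _ :: t => f t

def IsSchrodingerOp (V : List Bool → ℝ) (H : l2T →L[ℂ] l2T) : Prop :=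
  ∀ f : l2T, ∀ x : List Bool,
    (H f : ∀ _ : List Bool, ℂ) x =
      parentVal (fun y => f y) x + f (false :: x) + f (true :: x) + (V x : ℂ) * f x

def IsFreeLaplacian (H : l2T →L[ℂ] l2T) : Prop := IsSchrodingerOp (fun _ => 0) H

def IccC : Set ℂ := Complex.ofReal '' Set.Icc (-(2 * Real.sqrt 2)) (2 * Real.sqrt 2)

open scoped ComplexConjugate ENNReal InnerProductSpace

namespace TreeLap

/-! ### Basic `ℓ²` facts -/

lemma norm_sq_eq (f : l2T) : ‖f‖ ^ 2 = ∑' x, ‖f x‖ ^ 2 := by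
  have h := lp.norm_rpow_eq_tsum (p := 2) (E := fun _ : List Bool => ℂ) (by norm_num) f
  have h2 : ((2 : ℝ≥0∞)).toReal = ((2:ℕ):ℝ) := by norm_num
  rw [h2] at h
  simpa [Real.rpow_natCast] using h

lemma hasSum_norm_sq (f : l2T) : HasSum (fun x => ‖f x‖ ^ 2) (‖f‖ ^ 2) := by
  have h := lp.hasSum_norm (p := 2) (E := fun _ : List Bool => ℂ) (by norm_num) f
  have h2 : ((2 : ℝ≥0∞)).toReal = ((2:ℕ):ℝ) := by norm_num
  rw [h2] at h
  simpa [Real.rpow_natCast] using h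

lemma memℓp_two_iff (f : List Bool → ℂ) : Memℓp f 2 ↔ Summable fun x => ‖f x‖ ^ 2 := by
  rw [memℓp_gen_iff (by norm_num)]
  have h2 : ((2 : ℝ≥0∞)).toReal = ((2:ℕ):ℝ) := by norm_num
  rw [h2]
  simp [Real.rpow_natCast]

/-- auxiliary: function supported on lists with head `b`. -/
def sel {M : Type*} [Zero M] (b : Bool) (F : List Bool → M) : List Bool → M :=
  fun x => match x with
  | [] => 0
  | c :: t => if c = b then F t else 0

lemma consInj (b : Bool) : Function.Injective (List.cons b : List Bool → List Bool) :=
  fun _ _ h => by injection h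

lemma sel_zero {M : Type*} [Zero M] (b : Bool) (F : List Bool → M) :
    ∀ x ∉ Set.range (List.cons b : List Bool → List Bool), sel b F x = 0 := by
  rintro (_ | ⟨c, t⟩) hx
  · rfl
  · simp only [sel]
    rw [if_neg]
    rintro rfl
    exact hx ⟨t, rfl⟩

lemma hasSum_sel {M : Type*} [AddCommMonoid M] [TopologicalSpace M]
    (b : Bool) {F : List Bool → M} {a : M} (h : HasSum F a) : HasSum (sel b F) a := by
  rw [← Function.Injective.hasSum_iff (consInj b) (sel_zero b F)]
  have : sel b F ∘ (List.cons b) = F := by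
    funext t; simp [sel]
  rwa [this]

lemma lp_add_apply (f g : l2T) (x : List Bool) : (⇑(f + g)) x = f x + g x := by
  rw [lp.coeFn_add]; rfl
lemma lp_sub_apply (f g : l2T) (x : List Bool) : (⇑(f - g)) x = f x - g x := by
  rw [lp.coeFn_sub]; rfl
lemma lp_smul_apply (a : ℂ) (f : l2T) (x : List Bool) : (⇑(a • f)) x = a * f x := by
  rw [lp.coeFn_smul]; rfl

/-! ### The parent operator `Sop` and the children operator `Aop` -/

lemma parent_norm_decomp (f : List Bool → ℂ) :
    (fun x => ‖parentVal f x‖ ^ 2) =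
      (sel false fun t => ‖f t‖ ^ 2) + (sel true fun t => ‖f t‖ ^ 2) := by
  funext x
  rcases x with _ | ⟨c, t⟩
  · simp [parentVal, sel]
  · cases c <;> simp [parentVal, sel]

lemma hasSum_parent (f : l2T) :
    HasSum (fun x => ‖parentVal (⇑f) x‖ ^ 2) (‖f‖ ^ 2 + ‖f‖ ^ 2) := by
  rw [parent_norm_decomp]
  exact (hasSum_sel false (hasSum_norm_sq f)).add (hasSum_sel true (hasSum_norm_sq f))

lemma memS (f : l2T) : Memℓp (fun x => parentVal (⇑f) x) 2 :=
  (memℓp_two_iff _).2 (hasSum_parent f).summable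

lemma sq_le_sq_iff {a b : ℝ} (ha : 0 ≤ a) (hb : 0 ≤ b) (h : a ^ 2 ≤ b ^ 2) : a ≤ b := by
  nlinarith

/-- The underlying linear map of the parent operator. -/
def SL : l2T →ₗ[ℂ] l2T where
  toFun := fun f => (⟨fun x => parentVal (⇑f) x, memS f⟩ : l2T)
  map_add' := by
    intro f g; ext x
    rcases x with _ | ⟨c, t⟩
    · show (0:ℂ) = (0:ℂ) + 0; rw [add_zero]
    · show (⇑(f+g)) t = (⇑f) t + (⇑g) t
      rw [lp.coeFn_add]; rfl
  map_smul' := by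
    intro a f; ext x
    rcases x with _ | ⟨c, t⟩
    · show (0:ℂ) = a • (0:ℂ); rw [smul_zero]
    · show (⇑(a • f)) t = a • (⇑f) t
      rw [lp.coeFn_smul]; rfl

lemma SL_bound (f : l2T) : ‖SL f‖ ≤ Real.sqrt 2 * ‖f‖ := by
  have h1 : ‖SL f‖ ^ 2 = ‖f‖ ^ 2 + ‖f‖ ^ 2 :=
    (hasSum_norm_sq (SL f)).unique (hasSum_parent f)
  refine sq_le_sq_iff (norm_nonneg _) (by positivity) ?_
  rw [mul_pow, Real.sq_sqrt (by norm_num : (0:ℝ) ≤ 2), h1]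
  ring_nf
  exact le_rfl

/-- The parent operator. -/
def Sop : l2T →L[ℂ] l2T := LinearMap.mkContinuous SL (Real.sqrt 2) SL_bound

lemma Sop_apply (f : l2T) (x : List Bool) : (Sop f) x = parentVal (⇑f) x := rfl

lemma norm_Sop_le : ‖Sop‖ ≤ Real.sqrt 2 :=
  LinearMap.mkContinuous_norm_le SL (Real.sqrt_nonneg 2) SL_bound

lemma memC (b : Bool) (f : l2T) : Memℓp (fun x => (⇑f) (b :: x)) 2 := by
  refine (memℓp_two_iff _).2 ?_
  exact ((hasSum_norm_sq f).summable).comp_injective (consInj b)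

/-- The child operator (composition with `cons b`). -/
def Cop (b : Bool) : l2T →L[ℂ] l2T :=
  LinearMap.mkContinuous
    { toFun := fun f => (⟨fun x => (⇑f) (b :: x), memC b f⟩ : l2T)
      map_add' := by
        intro f g; ext x
        show (⇑(f+g)) (b :: x) = (⇑f) (b :: x) + (⇑g) (b :: x)
        rw [lp.coeFn_add]; rfl
      map_smul' := by
        intro a f; ext x
        show (⇑(a • f)) (b :: x) = a • (⇑f) (b :: x)
        rw [lp.coeFn_smul]; rfl }
    1
    (by
      intro f
      rw [one_mul]
      refine sq_le_sq_iff (norm_nonneg _) (norm_nonneg _) ?_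
      show ‖(⟨fun x => (⇑f) (b :: x), memC b f⟩ : l2T)‖ ^ 2 ≤ ‖f‖ ^ 2
      rw [norm_sq_eq, norm_sq_eq f]
      refine Summable.tsum_le_tsum_of_inj (List.cons b) (consInj b) (fun c _ => by positivity)
        (fun t => le_of_eq rfl) ?_ ?_
      · exact ((hasSum_norm_sq f).summable).comp_injective (consInj b)
      · exact (hasSum_norm_sq f).summable)

lemma Cop_apply (b : Bool) (f : l2T) (x : List Bool) : (Cop b f) x = f (b :: x) := rfl

/-- The children-sum operator. -/
def Aop : l2T →L[ℂ] l2T := Cop false + Cop true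

lemma Aop_apply (f : l2T) (x : List Bool) : (Aop f) x = f (false :: x) + f (true :: x) := by
  have : Aop f = Cop false f + Cop true f := rfl
  rw [this, lp.coeFn_add, Pi.add_apply, Cop_apply, Cop_apply]

lemma inner_eq (f g : l2T) : ⟪f, g⟫_ℂ = ∑' x, conj (f x) * g x := by
  rw [lp.inner_eq_tsum]; congr 1; funext x; rw [RCLike.inner_apply]; exact mul_comm _ _

lemma summable_inner_aux (f g : l2T) (b : Bool) :
    HasSum (fun t => conj (f t) * (g (b :: t))) (⟪f, Cop b g⟫_ℂ) := by
  have h := lp.summable_inner (𝕜 := ℂ) f (Cop b g)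
  have he : (fun i => ⟪(f i), ((Cop b g) i)⟫_ℂ) = fun t => conj (f t) * g (b :: t) := by
    funext t; rw [RCLike.inner_apply, Cop_apply]; exact mul_comm _ _
  rw [lp.inner_eq_tsum, ← he]
  exact h.hasSum

lemma symm_decomp (f g : l2T) :
    (fun x => conj ((Sop f) x) * g x) =
      (sel false fun t => conj (f t) * g (false :: t)) +
      (sel true fun t => conj (f t) * g (true :: t)) := by
  funext x
  rcases x with _ | ⟨c, t⟩
  · simp [Sop_apply, parentVal, sel]
  · cases c <;> simp [Sop_apply, parentVal, sel]

lemma sym_key (f g : l2T) : ⟪Sop f, g⟫_ℂ = ⟪f, Aop g⟫_ℂ := by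
  have hF : HasSum (fun x => conj ((Sop f) x) * g x)
      (⟪f, Cop false g⟫_ℂ + ⟪f, Cop true g⟫_ℂ) := by
    rw [symm_decomp]
    exact (hasSum_sel false (summable_inner_aux f g false)).add
      (hasSum_sel true (summable_inner_aux f g true))
  have h1 : ⟪Sop f, g⟫_ℂ = ⟪f, Cop false g⟫_ℂ + ⟪f, Cop true g⟫_ℂ := by
    rw [inner_eq]; exact hF.tsum_eq
  rw [h1, Aop]
  simp [inner_add_right]

lemma Aop_eq_adjoint : Aop = ContinuousLinearMap.adjoint Sop := by
  rw [ContinuousLinearMap.eq_adjoint_iff]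
  intro x y
  have := sym_key y x
  calc ⟪Aop x, y⟫_ℂ = conj ⟪y, Aop x⟫_ℂ := by rw [inner_conj_symm]
    _ = conj ⟪Sop y, x⟫_ℂ := by rw [this]
    _ = ⟪x, Sop y⟫_ℂ := by rw [inner_conj_symm]

/-- The free Laplacian. -/
def Hop : l2T →L[ℂ] l2T := Sop + Aop

lemma Hop_selfAdjoint : IsSelfAdjoint Hop := by
  rw [IsSelfAdjoint, ContinuousLinearMap.star_eq_adjoint, Hop, map_add,
    ← Aop_eq_adjoint, Aop_eq_adjoint, ContinuousLinearMap.adjoint_adjoint]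
  exact add_comm _ _

lemma Hop_isFreeLaplacian : IsFreeLaplacian Hop := by
  intro f x
  have h1 : (Hop f : ∀ _ : List Bool, ℂ) x = Sop f x + Aop f x := by
    rw [Hop, ContinuousLinearMap.add_apply, lp_add_apply]
  rw [h1, Sop_apply, Aop_apply]
  simp only [Complex.ofReal_zero, zero_mul, add_zero]
  ring

lemma norm_Hop_le : ‖Hop‖ ≤ 2 * Real.sqrt 2 := by
  have hA : ‖Aop‖ = ‖Sop‖ := by
    rw [Aop_eq_adjoint]
    exact ContinuousLinearMap.adjoint.norm_map Sop
  calc ‖Hop‖ ≤ ‖Sop‖ + ‖Aop‖ := norm_add_le _ _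
    _ ≤ Real.sqrt 2 + Real.sqrt 2 := by rw [hA]; linarith [norm_Sop_le]
    _ = 2 * Real.sqrt 2 := by ring

/-! ### Counting vertices by level -/

def Lset : ℕ → Finset (List Bool)
  | 0 => {[]}
  | k+1 => (Lset k).image (List.cons false) ∪ (Lset k).image (List.cons true)

lemma mem_Lset : ∀ k (x : List Bool), x ∈ Lset k ↔ x.length = k := by
  intro k
  induction k with
  | zero => intro x; simp [Lset, List.length_eq_zero_iff]
  | succ k ih =>
    rintro (_ | ⟨c, t⟩)
    · simp [Lset]
    · cases c <;> simp [Lset, ih]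

lemma card_Lset : ∀ k, (Lset k).card = 2 ^ k := by
  intro k
  induction k with
  | zero => rfl
  | succ k ih =>
    rw [Lset, Finset.card_union_of_disjoint,
      Finset.card_image_of_injective _ (fun _ _ h => by injection h),
      Finset.card_image_of_injective _ (fun _ _ h => by injection h), ih]
    · ring
    · rw [Finset.disjoint_left]
      rintro a ha hb
      simp only [Finset.mem_image] at ha hb
      obtain ⟨s, _, rfl⟩ := ha
      obtain ⟨u, _, h⟩ := hb
      simp at h

def LF (N : ℕ) : Finset (List Bool) := (Finset.range (N+1)).biUnion Lset

lemma mem_LF {N : ℕ} {x : List Bool} : x ∈ LF N ↔ x.length ≤ N := by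
  simp only [LF, Finset.mem_biUnion, Finset.mem_range]
  constructor
  · rintro ⟨k, hk, hx⟩; rw [mem_Lset] at hx; omega
  · intro h; exact ⟨x.length, by omega, (mem_Lset _ _).2 rfl⟩

/-- Sum of a function depending only on length, supported on lengths `≤ M`. -/
lemma tsum_levels (h : List Bool → ℝ) (w : ℕ → ℝ) (M : ℕ)
    (hval : ∀ x, h x = w x.length) (hsupp : ∀ k, M < k → w k = 0) :
    ∑' x, h x = ∑ k ∈ Finset.range (M+1), (2:ℝ) ^ k * w k := by
  have h0 : ∀ x ∉ LF M, h x = 0 := by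
    intro x hx
    rw [mem_LF] at hx
    rw [hval x, hsupp _ (by omega)]
  rw [tsum_eq_sum h0, LF, Finset.sum_biUnion]
  · refine Finset.sum_congr rfl fun k _ => ?_
    have : ∀ x ∈ Lset k, h x = w k := fun x hx => by
      rw [hval x, (mem_Lset _ _).1 hx]
    rw [Finset.sum_congr rfl this, Finset.sum_const, card_Lset]
    simp [mul_comm]
  · intro a _ b _ hab
    simp only [Finset.disjoint_left]
    intro x hxa hxb
    rw [mem_Lset] at hxa hxb
    exact hab (hxa ▸ hxb)

/-! ### Complex exponential identities -/

def zc (θ : ℝ) : ℂ := Complex.exp ((θ:ℂ) * Complex.I)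
def zc' (θ : ℝ) : ℂ := Complex.exp ((-θ:ℝ) * Complex.I)
def wc (θ : ℝ) : ℂ := (Real.sqrt 2 : ℂ)⁻¹ * zc θ
def cc (θ : ℝ) (k : ℕ) : ℂ := (wc θ) ^ k

lemma sqrt2_ne : (Real.sqrt 2 : ℂ) ≠ 0 := by
  simp only [ne_eq, Complex.ofReal_eq_zero]
  positivity

lemma sqrt2_sq : (Real.sqrt 2 : ℂ) ^ 2 = 2 := by
  rw [← Complex.ofReal_pow, Real.sq_sqrt (by norm_num : (0:ℝ) ≤ 2)]
  norm_num

lemma zz' (θ : ℝ) : zc θ * zc' θ = 1 := by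
  rw [zc, zc', ← Complex.exp_add]
  push_cast
  ring_nf
  exact Complex.exp_zero

lemma norm_zc' (θ : ℝ) : ‖zc' θ‖ = 1 := by
  rw [zc']
  exact Complex.norm_exp_ofReal_mul_I (-θ)

lemma norm_cc_sq (θ : ℝ) (k : ℕ) : ‖cc θ k‖ ^ 2 = (2⁻¹ : ℝ) ^ k := by
  have hz : ‖zc θ‖ = 1 := by
    rw [zc]
    exact Complex.norm_exp_ofReal_mul_I θ
  rw [cc, norm_pow, wc, norm_mul, hz, mul_one, norm_inv, Complex.norm_real,
    Real.norm_eq_abs, _root_.abs_of_nonneg (Real.sqrt_nonneg 2), ← pow_mul, mul_comm k 2, pow_mul,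
    ← Real.sqrt_inv, Real.sq_sqrt (by norm_num : (0:ℝ) ≤ 2⁻¹)]

lemma t_eq (θ t : ℝ) (ht : t = 2 * Real.sqrt 2 * Real.cos θ) :
    (t : ℂ) = Real.sqrt 2 * (zc θ + zc' θ) := by
  have h2 : 2 * Complex.cos θ = zc θ + zc' θ := by
    rw [Complex.cos, zc, zc']
    push_cast
    ring
  rw [ht]
  push_cast
  linear_combination (Real.sqrt 2 : ℂ) * h2

lemma key_id (θ t : ℝ) (ht : t = 2 * Real.sqrt 2 * Real.cos θ) :
    1 + 2 * (wc θ) ^ 2 = (t : ℂ) * wc θ := by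
  rw [t_eq θ t ht, wc]
  have h1 := zz' θ
  have hs : (Real.sqrt 2 : ℂ) * (Real.sqrt 2 : ℂ)⁻¹ = 1 := mul_inv_cancel₀ sqrt2_ne
  have hinv : 2 * ((Real.sqrt 2 : ℂ)⁻¹) ^ 2 = 1 := by
    rw [inv_pow, sqrt2_sq]
    norm_num
  linear_combination (zc θ) ^ 2 * hinv - ((zc θ) ^ 2 + zc θ * zc' θ) * hs - h1

lemma rec_id (θ t : ℝ) (ht : t = 2 * Real.sqrt 2 * Real.cos θ) (m : ℕ) :
    (t : ℂ) * cc θ (m+1) - cc θ m - 2 * cc θ (m+2) = 0 := by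
  have h := key_id θ t ht
  simp only [cc, pow_succ]
  linear_combination (wc θ)^m * h.symm

lemma head_id (θ t : ℝ) (ht : t = 2 * Real.sqrt 2 * Real.cos θ) :
    (t : ℂ) * cc θ 0 - 2 * cc θ 1 = Real.sqrt 2 * zc' θ := by
  rw [t_eq θ t ht]
  simp only [cc, pow_zero, pow_one, wc]
  have hs : (Real.sqrt 2 : ℂ) * (Real.sqrt 2 : ℂ)⁻¹ = 1 := mul_inv_cancel₀ sqrt2_ne
  linear_combination (zc θ) * (Real.sqrt 2 : ℂ)⁻¹ * sqrt2_sq - (zc θ) * (Real.sqrt 2 : ℂ) * hs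

/-! ### The Weyl sequence -/

section Weyl
variable (θ t : ℝ) (N : ℕ)

def Fw : List Bool → ℂ := fun x => if x.length ≤ N then cc θ x.length else 0

lemma memFw : Memℓp (Fw θ N) 2 := by
  refine (memℓp_two_iff _).2 (summable_of_ne_finset_zero (s := LF N) ?_)
  intro x hx
  rw [mem_LF] at hx
  simp [Fw, if_neg hx]

def fN : l2T := ⟨Fw θ N, memFw θ N⟩

lemma fN_apply (x : List Bool) : (fN θ N) x = Fw θ N x := rfl

lemma norm_fN_sq : ‖fN θ N‖ ^ 2 = N + 1 := by
  rw [norm_sq_eq]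
  have hval : ∀ x : List Bool,
      ‖(fN θ N) x‖ ^ 2 = (fun k => if k ≤ N then (2⁻¹:ℝ) ^ k else 0) x.length := by
    intro x
    show ‖Fw θ N x‖ ^ 2 = _
    simp only [Fw]
    by_cases h : x.length ≤ N
    · rw [if_pos h, if_pos h, norm_cc_sq]
    · rw [if_neg h, if_neg h, norm_zero]
      norm_num
  rw [tsum_levels _ (fun k => if k ≤ N then (2⁻¹:ℝ) ^ k else 0) N hval
    (by intro k hk; beta_reduce; rw [if_neg (by omega)])]
  have hone : ∀ k ∈ Finset.range (N+1),
      (2:ℝ) ^ k * (if k ≤ N then (2⁻¹:ℝ) ^ k else 0) = 1 := by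
    intro k hk
    rw [Finset.mem_range] at hk
    rw [if_pos (by omega), ← mul_pow]
    norm_num
  rw [Finset.sum_congr rfl hone, Finset.sum_const, Finset.card_range, nsmul_eq_mul, mul_one]
  push_cast
  ring

variable {H : l2T →L[ℂ] l2T}

lemma gN_apply (hH : IsFreeLaplacian H) (x : List Bool) :
    ((algebraMap ℂ (l2T →L[ℂ] l2T) t - H) (fN θ N)) x
      = (t:ℂ) * Fw θ N x - (parentVal (Fw θ N) x + Fw θ N (false :: x) + Fw θ N (true :: x)) := by
  rw [ContinuousLinearMap.sub_apply, lp_sub_apply, Algebra.algebraMap_eq_smul_one,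
    ContinuousLinearMap.smul_apply, ContinuousLinearMap.one_apply, lp_smul_apply]
  have h2 := hH (fN θ N) x
  rw [h2]
  have : ∀ y, (fN θ N) y = Fw θ N y := fun y => rfl
  simp only [this, Complex.ofReal_zero, zero_mul, add_zero]

def wG : ℕ → ℝ := fun k =>
  if k = 0 then 2 else if k = N then 4 * (2⁻¹:ℝ) ^ (N+1) else if k = N+1 then (2⁻¹:ℝ) ^ N else 0

lemma gN_norm_val (hH : IsFreeLaplacian H) (ht : t = 2 * Real.sqrt 2 * Real.cos θ)
    (hN : 1 ≤ N) (x : List Bool) :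
    ‖((algebraMap ℂ (l2T →L[ℂ] l2T) t - H) (fN θ N)) x‖ ^ 2 = wG N x.length := by
  rw [gN_apply θ t N hH x]
  rcases x with _ | ⟨c, tx⟩
  · -- root, length 0
    have h0 : (Fw θ N) [] = cc θ 0 := if_pos (by simp)
    have h1 : ∀ b, (Fw θ N) [b] = cc θ 1 := fun b => if_pos (by simpa using hN)
    have hp : parentVal (Fw θ N) [] = 0 := rfl
    rw [h0, h1, h1, hp]
    have he : (t:ℂ) * cc θ 0 - ((0:ℂ) + cc θ 1 + cc θ 1) = (t:ℂ) * cc θ 0 - 2 * cc θ 1 := by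
      ring
    rw [he, head_id θ t ht]
    simp only [List.length_nil, wG, if_pos rfl]
    rw [norm_mul, Complex.norm_real, Real.norm_eq_abs,
      _root_.abs_of_nonneg (Real.sqrt_nonneg 2), norm_zc', mul_one,
      Real.sq_sqrt (by norm_num : (0:ℝ) ≤ 2)]
    simp
  · -- x = c :: tx, length m+1 where m = tx.length
    set m := tx.length with hm
    have hlen : (c :: tx).length = m + 1 := rfl
    have hpar : parentVal (Fw θ N) (c :: tx) = Fw θ N tx := rfl
    have hchild : ∀ b, Fw θ N (b :: c :: tx) = if m + 2 ≤ N then cc θ (m+2) else 0 := fun b => rfl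
    rw [hpar, hchild, hchild, hlen]
    simp only [Fw, hlen, hm, List.length_cons]
    rcases lt_trichotomy (m+1) N with hc | hc | hc
    · -- interior: m+1 < N
      rw [if_pos (by omega), if_pos (by omega), if_pos (by omega)]
      have := rec_id θ t ht m
      have he : (t:ℂ) * cc θ (m+1) - (cc θ m + cc θ (m+2) + cc θ (m+2)) = 0 := by
        linear_combination this
      rw [he, norm_zero, wG, if_neg (by omega), if_neg (by omega), if_neg (by omega)]
      norm_num
    · -- m+1 = N
      rw [if_pos (by omega), if_pos (by omega), if_neg (by omega)]
      have := rec_id θ t ht m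
      have he : (t:ℂ) * cc θ (m+1) - (cc θ m + 0 + 0) = 2 * cc θ (m+2) := by
        linear_combination this
      rw [he, show m + 2 = N + 1 by omega, wG, if_neg (by omega), if_pos (by omega)]
      rw [norm_mul, mul_pow, norm_cc_sq]
      norm_num
    · -- m+1 > N
      rcases Nat.lt_or_ge (m+1) (N+2) with hc2 | hc2
      · -- m+1 = N+1
        have hmN : m = N := by omega
        rw [if_neg (by omega), if_pos (by omega), if_neg (by omega)]
        have he : (t:ℂ) * 0 - (cc θ m + 0 + 0) = -cc θ m := by ring
        rw [he, norm_neg, wG, if_neg (by omega), if_neg (by omega), if_pos (by omega),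
          norm_cc_sq, hmN]
      · -- m+1 ≥ N+2
        rw [if_neg (by omega), if_neg (by omega), if_neg (by omega)]
        have he : (t:ℂ) * 0 - ((0:ℂ) + 0 + 0) = 0 := by ring
        rw [he, norm_zero, wG, if_neg (by omega), if_neg (by omega), if_neg (by omega)]
        norm_num

lemma gN_norm_sq (hH : IsFreeLaplacian H) (ht : t = 2 * Real.sqrt 2 * Real.cos θ) (hN : 1 ≤ N) :
    ‖(algebraMap ℂ (l2T →L[ℂ] l2T) t - H) (fN θ N)‖ ^ 2 = 6 := by
  rw [norm_sq_eq]
  rw [tsum_levels _ (wG N) (N+1) (gN_norm_val θ t N hH ht hN)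
    (fun k hk => by rw [wG, if_neg (by omega), if_neg (by omega), if_neg (by omega)])]
  have hfun : ∀ k ∈ Finset.range (N+2), (2:ℝ)^k * wG N k =
      (if k = 0 then (2:ℝ) else 0) +
      ((if k = N then (2:ℝ) else 0) + (if k = N+1 then (2:ℝ) else 0)) := by
    intro k _
    rw [wG]
    rcases eq_or_ne k 0 with rfl | h0
    · rw [if_pos rfl, if_pos rfl, if_neg (by omega), if_neg (by omega)]
      norm_num
    · rw [if_neg h0, if_neg h0]
      rcases eq_or_ne k N with rfl | h1
      · rw [if_pos rfl, if_pos rfl, if_neg (by omega)]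
        have hone : (2:ℝ) ^ k * (2⁻¹:ℝ) ^ k = 1 := by rw [← mul_pow]; norm_num
        rw [pow_succ]
        linear_combination 2 * hone
      · rw [if_neg h1, if_neg h1]
        rcases eq_or_ne k (N+1) with rfl | h2
        · rw [if_pos rfl, if_pos rfl]
          have hone : (2:ℝ) ^ N * (2⁻¹:ℝ) ^ N = 1 := by rw [← mul_pow]; norm_num
          rw [pow_succ]
          linear_combination 2 * hone
        · rw [if_neg h2, if_neg h2]
          norm_num
  rw [Finset.sum_congr rfl hfun]
  rw [Finset.sum_add_distrib, Finset.sum_add_distrib,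
    Finset.sum_ite_eq' (Finset.range (N+2)) 0 (fun _ => (2:ℝ)),
    Finset.sum_ite_eq' (Finset.range (N+2)) N (fun _ => (2:ℝ)),
    Finset.sum_ite_eq' (Finset.range (N+2)) (N+1) (fun _ => (2:ℝ))]
  rw [if_pos (by rw [Finset.mem_range]; omega), if_pos (by rw [Finset.mem_range]; omega),
    if_pos (by rw [Finset.mem_range]; omega)]
  norm_num

end Weyl

/-! ### The spectrum -/

lemma spectrum_subset : spectrum ℂ Hop ⊆ IccC := by
  intro z hz
  have hre : z = z.re := Hop_selfAdjoint.mem_spectrum_eq_re hz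
  have hball := spectrum.subset_closedBall_norm_mul Hop hz
  rw [Metric.mem_closedBall, dist_zero_right] at hball
  have hone : ‖(1 : l2T →L[ℂ] l2T)‖ ≤ 1 := by
    rw [ContinuousLinearMap.one_def]
    exact ContinuousLinearMap.norm_id_le
  have hball2 : ‖z‖ ≤ ‖Hop‖ := by
    calc ‖z‖ ≤ ‖Hop‖ * ‖(1 : l2T →L[ℂ] l2T)‖ := hball
      _ ≤ ‖Hop‖ * 1 := mul_le_mul_of_nonneg_left hone (norm_nonneg _)
      _ = ‖Hop‖ := mul_one _
  have habs : |z.re| ≤ 2 * Real.sqrt 2 := by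
    calc |z.re| ≤ ‖z‖ := Complex.abs_re_le_norm z
      _ = ‖z‖ := rfl
      _ ≤ ‖Hop‖ := hball2
      _ ≤ 2 * Real.sqrt 2 := norm_Hop_le
  exact ⟨z.re, ⟨(abs_le.1 habs).1, (abs_le.1 habs).2⟩, hre.symm⟩

lemma spectrum_supset : IccC ⊆ spectrum ℂ Hop := by
  rintro z ⟨t, htIcc, rfl⟩
  by_contra hcon
  rw [spectrum.notMem_iff] at hcon
  obtain ⟨u, hu⟩ := hcon
  set B : l2T →L[ℂ] l2T := ↑u⁻¹ with hB
  have hbound : ∀ f : l2T, ‖f‖ ≤ ‖B‖ * ‖(algebraMap ℂ (l2T →L[ℂ] l2T) t - Hop) f‖ := by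
    intro f
    have h1 : B ((algebraMap ℂ (l2T →L[ℂ] l2T) t - Hop) f) = f := by
      rw [← hu, hB, ← ContinuousLinearMap.mul_apply, Units.inv_mul, ContinuousLinearMap.one_apply]
    conv_lhs => rw [← h1]
    exact ContinuousLinearMap.le_opNorm B _
  have h2s : (0:ℝ) < 2 * Real.sqrt 2 := by positivity
  set θ := Real.arccos (t / (2 * Real.sqrt 2)) with hθ
  have hdiv : -1 ≤ t / (2 * Real.sqrt 2) ∧ t / (2 * Real.sqrt 2) ≤ 1 := by
    constructor
    · rw [le_div_iff₀ h2s]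
      linarith [htIcc.1]
    · rw [div_le_one h2s]
      exact htIcc.2
  have ht : t = 2 * Real.sqrt 2 * Real.cos θ := by
    rw [hθ, Real.cos_arccos hdiv.1 hdiv.2, mul_comm, div_mul_cancel₀ t (ne_of_gt h2s)]
  set N : ℕ := ⌈‖B‖ ^ 2 * 6⌉₊ + 1 with hN
  have hN1 : 1 ≤ N := by omega
  have h1 := norm_fN_sq θ N
  have h2 := gN_norm_sq θ t N Hop_isFreeLaplacian ht hN1
  have h3 := hbound (fN θ N)
  have h4 : ‖fN θ N‖ ^ 2 ≤ ‖B‖ ^ 2 * 6 := by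
    calc ‖fN θ N‖ ^ 2
        ≤ (‖B‖ * ‖(algebraMap ℂ (l2T →L[ℂ] l2T) t - Hop) (fN θ N)‖) ^ 2 :=
          pow_le_pow_left₀ (norm_nonneg _) h3 2
      _ = ‖B‖ ^ 2 * ‖(algebraMap ℂ (l2T →L[ℂ] l2T) t - Hop) (fN θ N)‖ ^ 2 := by ring
      _ = ‖B‖ ^ 2 * 6 := by rw [h2]
  rw [h1] at h4
  have h5 : (‖B‖ ^ 2 * 6 : ℝ) ≤ ⌈‖B‖ ^ 2 * 6⌉₊ := Nat.le_ceil _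
  have h6 : (N : ℝ) = (⌈‖B‖ ^ 2 * 6⌉₊ : ℝ) + 1 := by
    rw [hN]; push_cast; ring
  linarith

theorem spectrum_eq : spectrum ℂ Hop = IccC :=
  le_antisymm spectrum_subset spectrum_supset

end TreeLap

theorem stmt0 :
    ∃ H : l2T →L[ℂ] l2T, IsFreeLaplacian H ∧ IsSelfAdjoint H ∧ spectrum ℂ H = IccC := by
  exact ⟨TreeLap.Hop, TreeLap.Hop_isFreeLaplacian, TreeLap.Hop_selfAdjoint, TreeLap.spectrum_eq⟩
end
end

section
/- Let S be the unilateral shift on ℓ²(ℕ₀) (S e_n = e_{n+1}), let S₁ be the binary shift on ℓ²(T) defined by S₁ e_x = e_{x0} + e_{x1} (the sum of the basis vectors at the two children of x), and let W : ℓ²(ℕ₀) → ℓ²(T) be the linear map with W e_n = 2^{−n/2} Σ_{x:|x|=n} e_x. Then: (i) W is an isometry; (ii) H₀ = S₁ + S₁*; (iii) S₁ W = √2 · W S; (iv) W* S₁* = √2 · S* W*; (v) W* S₁ = √2 · S W*; and (vi) S₁* W = √2 · W S*. -/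
open MeasureTheory Filter ContinuousLinearMap

set_option maxHeartbeats 1000000

noncomputable section

abbrev l2N : Type := lp (fun _ : ℕ => ℂ) 2

def eN (n : ℕ) : l2N := lp.single 2 n 1

/-- The sphere `{x : |x| = n}` of the binary tree, as a `Finset`. -/
def sphereF (n : ℕ) : Finset (List Bool) :=
  Finset.image (fun f : Fin n → Bool => List.ofFn f) Finset.univ

/-! ### Auxiliary lemmas -/

section Aux

open scoped InnerProductSpace ComplexConjugate

lemma aux_single_smul {ι : Type*} [DecidableEq ι] (i : ι) (c : ℂ) :
    (lp.single 2 i c : lp (fun _ : ι => ℂ) 2) = c • lp.single 2 i (1 : ℂ) := by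
  apply lp.ext
  funext j
  simp [lp.single_apply, Pi.single_apply]

lemma aux_clm_ext {ι F : Type*} [DecidableEq ι] [NormedAddCommGroup F] [NormedSpace ℂ F]
    (T T' : lp (fun _ : ι => ℂ) 2 →L[ℂ] F)
    (h : ∀ i, T (lp.single 2 i 1) = T' (lp.single 2 i 1)) : T = T' := by
  ext f
  have hs := lp.hasSum_single (E := fun _ : ι => ℂ) (p := 2) (by norm_num) f
  have key : (fun i => T (lp.single 2 i (f i))) = fun i => T' (lp.single 2 i (f i)) := by
    funext i
    rw [aux_single_smul, _root_.map_smul, _root_.map_smul, h]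
  have h1 := hs.mapL T
  rw [key] at h1
  exact h1.unique (hs.mapL T')

lemma aux_coord_inner {ι : Type*} [DecidableEq ι] (f : lp (fun _ : ι => ℂ) 2) (i : ι) :
    ⟪(lp.single 2 i (1 : ℂ) : lp (fun _ : ι => ℂ) 2), f⟫_ℂ = f i := by
  rw [lp.inner_single_left]; simp [RCLike.inner_apply]

lemma eT_inner (x : List Bool) (f : l2T) : ⟪eT x, f⟫_ℂ = f x := aux_coord_inner f x

lemma eN_inner (n : ℕ) (f : l2N) : ⟪eN n, f⟫_ℂ = f n := aux_coord_inner f n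

lemma eT_apply (y x : List Bool) : (eT y : ∀ _ : List Bool, ℂ) x = if x = y then 1 else 0 := by
  by_cases h : x = y <;> simp [eT, lp.single_apply, h]

lemma eN_apply (m k : ℕ) : (eN m : ∀ _ : ℕ, ℂ) k = if k = m then 1 else 0 := by
  by_cases h : k = m <;> simp [eN, lp.single_apply, h]

lemma mem_sphereF {n : ℕ} {x : List Bool} : x ∈ sphereF n ↔ x.length = n := by
  simp only [sphereF, Finset.mem_image, Finset.mem_univ, true_and]
  constructor
  · rintro ⟨f, rfl⟩; simp
  · rintro rfl; exact ⟨x.get, List.ofFn_get x⟩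

lemma card_sphereF (n : ℕ) : (sphereF n).card = 2 ^ n := by
  rw [sphereF, Finset.card_image_of_injective _ List.ofFn_injective]
  simp

lemma sphereF_zero : sphereF 0 = {[]} := by
  ext x; simp [mem_sphereF, List.length_eq_zero_iff]

lemma sum_sphereF_succ {M : Type*} [AddCommMonoid M] (n : ℕ) (g : List Bool → M) :
    ∑ x ∈ sphereF (n + 1), g x = ∑ x ∈ sphereF n, (g (false :: x) + g (true :: x)) := by
  have himg : sphereF (n + 1)
      = Finset.image (fun p : Bool × List Bool => p.1 :: p.2) (Finset.univ ×ˢ sphereF n) := by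
    ext x
    simp only [mem_sphereF, Finset.mem_image, Finset.mem_product, Finset.mem_univ, true_and]
    constructor
    · intro h
      match x with
      | b :: t => exact ⟨(b, t), by simpa [mem_sphereF] using Nat.succ_injective h, rfl⟩
    · rintro ⟨⟨b, t⟩, ht, rfl⟩
      simp [mem_sphereF] at ht ⊢
      omega
  rw [himg, Finset.sum_image (by rintro ⟨a, x⟩ _ ⟨b, y⟩ _ h; simpa using h),
    Finset.sum_product, Fintype.sum_bool, ← Finset.sum_add_distrib]
  exact Finset.sum_congr rfl fun x _ => add_comm _ _

/-- The "parent" basis vector: `0` at the root, `eT t` at `b :: t`. -/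
def parentE : List Bool → l2T
  | [] => 0
  | _ :: t => eT t

lemma aux_adjoint_smul_ofReal {E F : Type*} [NormedAddCommGroup E] [NormedAddCommGroup F]
    [InnerProductSpace ℂ E] [InnerProductSpace ℂ F] [CompleteSpace E] [CompleteSpace F]
    (r : ℝ) (A : E →L[ℂ] F) :
    adjoint ((r : ℂ) • A) = (r : ℂ) • adjoint A := by
  symm
  rw [ContinuousLinearMap.eq_adjoint_iff]
  intro x y
  simp only [ContinuousLinearMap.smul_apply, inner_smul_left, inner_smul_right,
    Complex.conj_ofReal, ContinuousLinearMap.adjoint_inner_left]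

end Aux

section Main

open scoped InnerProductSpace ComplexConjugate

theorem stmt16
    (S : l2N →L[ℂ] l2N) (hS : ∀ n : ℕ, S (eN n) = eN (n + 1))
    (S₁ : l2T →L[ℂ] l2T)
    (hS₁ : ∀ x : List Bool, S₁ (eT x) = eT (false :: x) + eT (true :: x))
    (W : l2N →L[ℂ] l2T)
    (hW : ∀ n : ℕ, W (eN n) = ((Real.sqrt 2 : ℂ))⁻¹ ^ n • ∑ x ∈ sphereF n, eT x)
    (H₀ : l2T →L[ℂ] l2T) (hH₀ : IsFreeLaplacian H₀) :
    Isometry W ∧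
    H₀ = S₁ + adjoint S₁ ∧
    S₁ ∘L W = (Real.sqrt 2 : ℂ) • (W ∘L S) ∧
    adjoint W ∘L adjoint S₁ = (Real.sqrt 2 : ℂ) • (adjoint S ∘L adjoint W) ∧
    adjoint W ∘L S₁ = (Real.sqrt 2 : ℂ) • (S ∘L adjoint W) ∧
    adjoint S₁ ∘L W = (Real.sqrt 2 : ℂ) • (W ∘L adjoint S) := by
  have hsne : ((Real.sqrt 2 : ℝ) : ℂ) ≠ 0 := by
    simp only [ne_eq, Complex.ofReal_eq_zero]
    positivity
  have hs2 : ((Real.sqrt 2 : ℝ) : ℂ) * ((Real.sqrt 2 : ℝ) : ℂ) = 2 := by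
    rw [← Complex.ofReal_mul, Real.mul_self_sqrt (by norm_num)]
    norm_num
  -- pointwise description of `S₁`
  have hS₁ap : ∀ (f : l2T) (y : List Bool),
      (S₁ f : ∀ _ : List Bool, ℂ) y = parentVal (fun z => f z) y := by
    intro f y
    match y with
    | [] =>
      have hext : (innerSL ℂ (eT [])).comp S₁ = (0 : l2T →L[ℂ] ℂ) := by
        apply aux_clm_ext
        intro x
        rw [show (lp.single 2 x 1 : l2T) = eT x from rfl]
        simp only [ContinuousLinearMap.comp_apply, hS₁ x, innerSL_apply_apply, inner_add_right,
          ContinuousLinearMap.zero_apply]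
        rw [eT_inner, eT_inner, eT_apply, eT_apply]
        simp
      have happ := congrArg (fun T : l2T →L[ℂ] ℂ => T f) hext
      simp only [ContinuousLinearMap.comp_apply, innerSL_apply_apply,
        ContinuousLinearMap.zero_apply] at happ
      rw [eT_inner] at happ
      rw [happ]
      rfl
    | b :: t =>
      have hext : (innerSL ℂ (eT (b :: t))).comp S₁ = innerSL ℂ (eT t) := by
        apply aux_clm_ext
        intro x
        rw [show (lp.single 2 x 1 : l2T) = eT x from rfl]
        simp only [ContinuousLinearMap.comp_apply, hS₁ x, innerSL_apply_apply, inner_add_right]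
        rw [eT_inner, eT_inner, eT_inner, eT_apply, eT_apply, eT_apply]
        cases b <;> simp
      have happ := congrArg (fun T : l2T →L[ℂ] ℂ => T f) hext
      simp only [ContinuousLinearMap.comp_apply, innerSL_apply_apply] at happ
      rw [eT_inner, eT_inner] at happ
      rw [happ]
      rfl
  -- pointwise description of `adjoint S₁`
  have hS₁adjap : ∀ (f : l2T) (y : List Bool),
      (adjoint S₁ f : ∀ _ : List Bool, ℂ) y = f (false :: y) + f (true :: y) := by
    intro f y
    rw [← eT_inner, ContinuousLinearMap.adjoint_inner_right, hS₁, inner_add_left,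
      eT_inner, eT_inner]
  -- `adjoint S₁` on basis vectors
  have hS₁adj : ∀ x : List Bool, adjoint S₁ (eT x) = parentE x := by
    intro x
    apply lp.ext
    funext y
    rw [hS₁adjap (eT x) y]
    match x with
    | [] => simp [parentE, eT_apply]
    | b :: t =>
      cases b <;> simp [parentE, eT_apply]
  -- `adjoint S` on basis vectors
  have hSadjap : ∀ (f : l2N) (m : ℕ), (adjoint S f : ∀ _ : ℕ, ℂ) m = f (m + 1) := by
    intro f m
    rw [← eN_inner, ContinuousLinearMap.adjoint_inner_right, hS, eN_inner]
  have hSadj0 : adjoint S (eN 0) = 0 := by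
    apply lp.ext
    funext m
    rw [hSadjap, eN_apply]
    simp
  have hSadjS : ∀ n : ℕ, adjoint S (eN (n + 1)) = eN n := by
    intro n
    apply lp.ext
    funext m
    rw [hSadjap, eN_apply, eN_apply]
    simp
  -- inner products of images of basis vectors under W
  have hinner : ∀ k m : ℕ, ⟪W (eN k), W (eN m)⟫_ℂ = if k = m then 1 else 0 := by
    intro k m
    rw [hW, hW, inner_smul_left, inner_smul_right, sum_inner]
    simp_rw [inner_sum]
    have hterm : ∀ x y : List Bool, ⟪eT x, eT y⟫_ℂ = if x = y then 1 else 0 := by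
      intro x y
      rw [eT_inner, eT_apply]
    simp_rw [hterm]
    by_cases hkm : k = m
    · subst hkm
      have hsum : ∑ x ∈ sphereF k, ∑ y ∈ sphereF k, (if x = y then (1 : ℂ) else 0)
          = (2 : ℂ) ^ k := by
        have : ∀ x ∈ sphereF k, ∑ y ∈ sphereF k, (if x = y then (1 : ℂ) else 0) = 1 := by
          intro x hx
          rw [Finset.sum_ite_eq (sphereF k) x (fun _ => (1 : ℂ))]
          simp [hx]
        rw [Finset.sum_congr rfl this]
        simp [card_sphereF]
      rw [hsum, if_pos rfl, map_pow, map_inv₀, Complex.conj_ofReal]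
      rw [← mul_assoc, ← mul_pow, ← mul_pow]
      rw [← mul_inv, hs2]
      norm_num
    · rw [if_neg hkm]
      have : ∀ x ∈ sphereF k, ∑ y ∈ sphereF m, (if x = y then (1 : ℂ) else 0) = 0 := by
        intro x hx
        apply Finset.sum_eq_zero
        intro y hy
        rw [if_neg]
        intro hxy
        exact hkm (by rw [← mem_sphereF.mp hx, ← mem_sphereF.mp hy, hxy])
      rw [Finset.sum_congr rfl this]
      simp
  -- W* W = 1
  have hWW : adjoint W ∘L W = ContinuousLinearMap.id ℂ l2N := by
    apply aux_clm_ext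
    intro m
    rw [show (lp.single 2 m 1 : l2N) = eN m from rfl]
    apply lp.ext
    funext k
    have h1 : ((adjoint W ∘L W) (eN m) : ∀ _ : ℕ, ℂ) k = ⟪W (eN k), W (eN m)⟫_ℂ := by
      rw [← eN_inner, ContinuousLinearMap.comp_apply, ContinuousLinearMap.adjoint_inner_right]
    rw [h1, hinner]
    simp [eN_apply]
  -- (i) isometry
  have hIso : Isometry W := by
    refine AddMonoidHomClass.isometry_of_norm W fun f => ?_
    have h1 : ⟪W f, W f⟫_ℂ = ⟪f, f⟫_ℂ := by
      rw [← ContinuousLinearMap.adjoint_inner_left W]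
      have h2 : adjoint W (W f) = f := by
        have := congrArg (fun T : l2N →L[ℂ] l2N => T f) hWW
        simpa using this
      rw [h2]
    have h2 : ‖W f‖ ^ 2 = ‖f‖ ^ 2 := by
      have h3 := congrArg (fun z : ℂ => RCLike.re z) h1
      rwa [inner_self_eq_norm_sq (𝕜 := ℂ), inner_self_eq_norm_sq (𝕜 := ℂ)] at h3
    calc ‖W f‖ = Real.sqrt (‖W f‖ ^ 2) := (Real.sqrt_sq (norm_nonneg _)).symm
      _ = Real.sqrt (‖f‖ ^ 2) := by rw [h2]
      _ = ‖f‖ := Real.sqrt_sq (norm_nonneg _)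
  -- (ii)
  have hii : H₀ = S₁ + adjoint S₁ := by
    apply ContinuousLinearMap.ext
    intro f
    apply lp.ext
    funext x
    have h0 := hH₀ f x
    simp only [Complex.ofReal_zero, zero_mul, add_zero] at h0
    show (H₀ f : ∀ _ : List Bool, ℂ) x = ((S₁ + adjoint S₁) f : ∀ _ : List Bool, ℂ) x
    rw [h0, ContinuousLinearMap.add_apply, lp.coeFn_add, Pi.add_apply, hS₁ap, hS₁adjap]
    ring
  -- (iii)
  have hiii : S₁ ∘L W = (Real.sqrt 2 : ℂ) • (W ∘L S) := by
    apply aux_clm_ext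
    intro n
    rw [show (lp.single 2 n 1 : l2N) = eN n from rfl]
    simp only [ContinuousLinearMap.comp_apply, ContinuousLinearMap.smul_apply]
    rw [hS n, hW, hW (n + 1), _root_.map_smul, map_sum, smul_smul]
    have hsum : ∑ x ∈ sphereF n, S₁ (eT x) = ∑ x ∈ sphereF (n + 1), eT x := by
      rw [sum_sphereF_succ n eT]
      exact Finset.sum_congr rfl fun x _ => hS₁ x
    rw [hsum]
    congr 1
    rw [pow_succ, ← mul_assoc, mul_comm ((Real.sqrt 2 : ℂ)) _, mul_assoc,
      mul_inv_cancel₀ hsne, mul_one]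
  -- (vi)
  have hvi : adjoint S₁ ∘L W = (Real.sqrt 2 : ℂ) • (W ∘L adjoint S) := by
    apply aux_clm_ext
    intro n
    rw [show (lp.single 2 n 1 : l2N) = eN n from rfl]
    simp only [ContinuousLinearMap.comp_apply, ContinuousLinearMap.smul_apply]
    cases n with
    | zero =>
      rw [hSadj0, map_zero, smul_zero, hW, _root_.map_smul, map_sum, sphereF_zero,
        Finset.sum_singleton, hS₁adj]
      simp [parentE]
    | succ n =>
      rw [hSadjS n, hW n, hW (n + 1), _root_.map_smul, map_sum]
      simp_rw [hS₁adj]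
      rw [sum_sphereF_succ n parentE]
      have hpe : ∀ x : List Bool, parentE (false :: x) + parentE (true :: x) = (2 : ℂ) • eT x := by
        intro x
        show eT x + eT x = (2 : ℂ) • eT x
        rw [two_smul]
      simp_rw [hpe]
      rw [← Finset.smul_sum, smul_smul, smul_smul]
      congr 1
      rw [pow_succ]
      field_simp
      rw [← hs2]
      ring
  -- (iv) from (iii), (v) from (vi)
  have hiv : adjoint W ∘L adjoint S₁ = (Real.sqrt 2 : ℂ) • (adjoint S ∘L adjoint W) := by
    have h := congrArg (fun A : l2N →L[ℂ] l2T => adjoint A) hiii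
    simp only [ContinuousLinearMap.adjoint_comp] at h
    rwa [aux_adjoint_smul_ofReal, ContinuousLinearMap.adjoint_comp] at h
  have hv : adjoint W ∘L S₁ = (Real.sqrt 2 : ℂ) • (S ∘L adjoint W) := by
    have h := congrArg (fun A : l2N →L[ℂ] l2T => adjoint A) hvi
    simp only [ContinuousLinearMap.adjoint_comp] at h
    rwa [aux_adjoint_smul_ofReal, ContinuousLinearMap.adjoint_comp,
      ContinuousLinearMap.adjoint_adjoint, ContinuousLinearMap.adjoint_adjoint] at h
  exact ⟨hIso, hii, hiii, hiv, hv, hvi⟩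

end Main
end
end
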